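/- arXiv:1112.3610 — 2 statements merged into one kernel-verified Lean document; each statement's English description precedes it below -/
import Mathlib

section
/- For any well-tempered scoring game G and integer t: L(∫^t G) = L(G) + t·π(G) and R(∫^t G) = R(G) - t·π(G), where π(G) is the parity of G. -/
/-- Well-tempered scoring game trees: an integer (final score) or a position
with lists of Left and Right options. -/
inductive WT : Type where
  | int : ℤ → WT
  | node : List WT → List WT → WT

namespace WT

/-- Left options. -/
def lopts : WT → List WT
  | int _ => []
  | node L _ => L

/-- Right options. -/
def ropts : WT → List WT
  | int _ => []
  | node _ R => R

theorem sizeOf_lt_of_mem_lopts : ∀ {G g : WT}, g ∈ G.lopts → sizeOf g < sizeOf G := by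
  intro G g h
  cases G with
  | int n => simp [lopts] at h
  | node L R =>
    simp only [lopts] at h
    have h1 := List.sizeOf_lt_of_mem h
    have h2 : sizeOf (WT.node L R) = 1 + sizeOf L + sizeOf R := by simp
    omega

theorem sizeOf_lt_of_mem_ropts : ∀ {G g : WT}, g ∈ G.ropts → sizeOf g < sizeOf G := by
  intro G g h
  cases G with
  | int n => simp [ropts] at h
  | node L R =>
    simp only [ropts] at h
    have h1 := List.sizeOf_lt_of_mem h
    have h2 : sizeOf (WT.node L R) = 1 + sizeOf L + sizeOf R := by simp
    omega

/-- Disjunctive sum of two games. -/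
def add (G H : WT) : WT :=
  match G, H with
  | int m, int n => int (m + n)
  | G, H =>
    node ((G.lopts.attach.map fun g => add g.1 H) ++ (H.lopts.attach.map fun h => add G h.1))
         ((G.ropts.attach.map fun g => add g.1 H) ++ (H.ropts.attach.map fun h => add G h.1))
termination_by sizeOf G + sizeOf H
decreasing_by
  all_goals
    first
      | (have := sizeOf_lt_of_mem_lopts g.2; omega)
      | (have := sizeOf_lt_of_mem_lopts h.2; omega)
      | (have := sizeOf_lt_of_mem_ropts g.2; omega)
      | (have := sizeOf_lt_of_mem_ropts h.2; omega)

/-- Negation of a game: swap players and negate scores. -/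
def neg : WT → WT
  | int n => int (-n)
  | node L R =>
    node ((WT.node L R).ropts.attach.map fun g => neg g.1)
         ((WT.node L R).lopts.attach.map fun g => neg g.1)
termination_by G => sizeOf G
decreasing_by
  all_goals
    first
      | exact sizeOf_lt_of_mem_lopts g.2
      | exact sizeOf_lt_of_mem_ropts g.2

def lmax : List ℤ → ℤ
  | [] => 0
  | x :: xs => xs.foldl max x

def lmin : List ℤ → ℤ
  | [] => 0
  | x :: xs => xs.foldl min x

/-- The pair (left outcome, right outcome). -/
def out : WT → ℤ × ℤ
  | int n => (n, n)
  | node L R =>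
    (lmax ((WT.node L R).lopts.attach.map fun g => (out g.1).2),
     lmin ((WT.node L R).ropts.attach.map fun g => (out g.1).1))
termination_by G => sizeOf G
decreasing_by
  all_goals
    first
      | exact sizeOf_lt_of_mem_lopts g.2
      | exact sizeOf_lt_of_mem_ropts g.2

/-- Left outcome L(G): optimal score when Left moves first. -/
def Lout (G : WT) : ℤ := G.out.1

/-- Right outcome R(G): optimal score when Right moves first. -/
def Rout (G : WT) : ℤ := G.out.2

/-- `IsWT G p` : `G` is a well-tempered game of parity `p`
(`false` = even-tempered, `true` = odd-tempered). -/
inductive IsWT : WT → Bool → Prop where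
  | int (n : ℤ) : IsWT (WT.int n) false
  | node {L R : List WT} {p : Bool} (hL : L ≠ []) (hR : R ≠ [])
      (hLp : ∀ g ∈ L, IsWT g p) (hRp : ∀ g ∈ R, IsWT g p) :
      IsWT (WT.node L R) (!p)

/-- `G` is a well-tempered game (of some parity). -/
def Wt (G : WT) : Prop := ∃ p, IsWT G p

/-- Parity, computed structurally (`false` = even-tempered, `true` = odd-tempered;
agrees with `IsWT` on well-tempered games). -/
def par : WT → Bool
  | int _ => false
  | node [] _ => true
  | node (g :: _) _ => !(par g)

/-- Final score under optimal play when Left moves last. -/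
def Lf (G : WT) : ℤ := if G.par then G.Lout else G.Rout

/-- Final score under optimal play when Right moves last. -/
def Rf (G : WT) : ℤ := if G.par then G.Rout else G.Lout

/-- `G ≲ H` : for every well-tempered `X`, `L(G+X) ≤ L(H+X)` and `R(G+X) ≤ R(H+X)`. -/
def Le (G H : WT) : Prop :=
  ∀ X : WT, X.Wt → (G.add X).Lout ≤ (H.add X).Lout ∧ (G.add X).Rout ≤ (H.add X).Rout

/-- `G ≳ H`. -/
def Ge (G H : WT) : Prop := Le H G

/-- `G ≈ H` : equivalence of scoring games. -/
def Equiv (G H : WT) : Prop :=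
  ∀ X : WT, X.Wt → (G.add X).Lout = (H.add X).Lout ∧ (G.add X).Rout = (H.add X).Rout

/-- `G` and `H` are well-tempered with the same parity. -/
def SamePar (G H : WT) : Prop := ∃ p, IsWT G p ∧ IsWT H p

/-- `G` takes values in `S`: every integer subgame lies in `S`. -/
inductive Valued (S : Set ℤ) : WT → Prop where
  | int {n : ℤ} : n ∈ S → Valued S (WT.int n)
  | node {L R : List WT} : (∀ g ∈ L, Valued S g) → (∀ g ∈ R, Valued S g) →
      Valued S (WT.node L R)

/-- `Subgame H G` : `H` is a subgame of `G`. -/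
inductive Subgame : WT → WT → Prop where
  | refl (G : WT) : Subgame G G
  | left {H G' : WT} {L R : List WT} : G' ∈ L → Subgame H G' → Subgame H (WT.node L R)
  | right {H G' : WT} {L R : List WT} : G' ∈ R → Subgame H G' → Subgame H (WT.node L R)

/-- `gap G p` : supremum of `R(H) - L(H)` over subgames `H` of `G` of parity `p`
(as an element of `WithBot ℤ`; the supremum of the empty set is `⊥ = -∞`). -/
noncomputable def gap (G : WT) (p : Bool) : WithBot ℤ :=
  sSup {x : WithBot ℤ | ∃ H : WT, Subgame H G ∧ IsWT H p ∧ x = ((H.Rout - H.Lout : ℤ) : WithBot ℤ)}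

/-- Heating by `t`. -/
def heat (t : ℤ) : WT → WT
  | int n => int n
  | node L R =>
    node ((WT.node L R).lopts.attach.map fun g => (WT.int t).add (heat t g.1))
         ((WT.node L R).ropts.attach.map fun g => (WT.int (-t)).add (heat t g.1))
termination_by G => sizeOf G
decreasing_by
  all_goals
    first
      | exact sizeOf_lt_of_mem_lopts g.2
      | exact sizeOf_lt_of_mem_ropts g.2

end WT

namespace WT

theorem node_add_int (t : ℤ) (L R : List WT) :
    (WT.int t).add (WT.node L R) =
    WT.node (L.attach.map fun h => (WT.int t).add h.1)
            (R.attach.map fun h => (WT.int t).add h.1) := by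
  rw [WT.add]
  · simp [WT.lopts, WT.ropts]
  · intro m n _ h; cases h

theorem node_out (L R : List WT) :
    (WT.node L R).out =
    (WT.lmax (L.map fun g => g.out.2), WT.lmin (R.map fun g => g.out.1)) := by
  rw [WT.out]
  simp [WT.lopts, WT.ropts, List.map_attach_eq_pmap]

theorem heat_node (t : ℤ) (L R : List WT) :
    WT.heat t (WT.node L R) =
    WT.node (L.attach.map fun g => (WT.int t).add (WT.heat t g.1))
            (R.attach.map fun g => (WT.int (-t)).add (WT.heat t g.1)) := by
  rw [WT.heat]
  simp [WT.lopts, WT.ropts]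

theorem foldl_max_add (t : ℤ) : ∀ (xs : List ℤ) (x : ℤ),
    (xs.map (t + ·)).foldl max (t + x) = t + xs.foldl max x := by
  intro xs
  induction xs with
  | nil => intro x; simp
  | cons a l ih => intro x; simpa [max_add_add_left] using ih (max x a)

theorem foldl_min_add (t : ℤ) : ∀ (xs : List ℤ) (x : ℤ),
    (xs.map (t + ·)).foldl min (t + x) = t + xs.foldl min x := by
  intro xs
  induction xs with
  | nil => intro x; simp
  | cons a l ih => intro x; simpa [min_add_add_left] using ih (min x a)

theorem lmax_map_add (t : ℤ) (l : List ℤ) (h : l ≠ []) :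
    WT.lmax (l.map (t + ·)) = t + WT.lmax l := by
  cases l with
  | nil => exact absurd rfl h
  | cons x xs => simp [WT.lmax, foldl_max_add]

theorem lmin_map_add (t : ℤ) (l : List ℤ) (h : l ≠ []) :
    WT.lmin (l.map (t + ·)) = t + WT.lmin l := by
  cases l with
  | nil => exact absurd rfl h
  | cons x xs => simp [WT.lmin, foldl_min_add]

theorem isWT_add_int (t : ℤ) : ∀ {H p}, WT.IsWT H p → WT.IsWT ((WT.int t).add H) p := by
  intro H p h
  induction h with
  | int n => rw [WT.add]; exact .int _
  | @node L R p hL hR hLp hRp ihL ihR =>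
    rw [node_add_int]
    refine .node (by simpa using hL) (by simpa using hR) ?_ ?_ <;>
      · intro g hg
        simp only [List.mem_map, List.mem_attach, true_and] at hg
        obtain ⟨⟨a, ha⟩, rfl⟩ := hg
        first
          | exact ihL a ha
          | exact ihR a ha

theorem add_int_out (t : ℤ) : ∀ {H p}, WT.IsWT H p →
    ((WT.int t).add H).out = (t + H.out.1, t + H.out.2) := by
  intro H p h
  induction h with
  | int n => rw [WT.add]; simp [WT.out]
  | @node L R p hL hR hLp hRp ihL ihR =>
    rw [node_add_int, node_out, node_out]
    have h1 : (L.attach.map fun h => (WT.int t).add h.1).map (fun g => g.out.2)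
        = (L.map fun g => g.out.2).map (t + ·) := by
      simp only [List.map_attach_eq_pmap, List.map_map, List.map_pmap]
      rw [List.pmap_eq_map]
      apply List.map_congr_left
      intro a ha
      simp [ihL a ha]
    have h2 : (R.attach.map fun h => (WT.int t).add h.1).map (fun g => g.out.1)
        = (R.map fun g => g.out.1).map (t + ·) := by
      simp only [List.map_attach_eq_pmap, List.map_map, List.map_pmap]
      rw [List.pmap_eq_map]
      apply List.map_congr_left
      intro a ha
      simp [ihR a ha]
    rw [h1, h2, lmax_map_add _ _ (by simpa using hL), lmin_map_add _ _ (by simpa using hR)]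

theorem isWT_heat (t : ℤ) : ∀ {G p}, WT.IsWT G p → WT.IsWT (WT.heat t G) p := by
  intro G p h
  induction h with
  | int n => rw [WT.heat]; exact .int _
  | @node L R p hL hR hLp hRp ihL ihR =>
    rw [heat_node]
    refine .node (by simpa using hL) (by simpa using hR) ?_ ?_ <;>
      · intro g hg
        simp only [List.mem_map, List.mem_attach, true_and] at hg
        obtain ⟨⟨a, ha⟩, rfl⟩ := hg
        first
          | exact isWT_add_int t (ihL a ha)
          | exact isWT_add_int (-t) (ihR a ha)

end WT

/-- L(∫^t G) = L(G) + t·π(G) and R(∫^t G) = R(G) - t·π(G). -/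
theorem heat_outcomes (G : WT) (p : Bool) (hG : WT.IsWT G p) (t : ℤ) :
    (WT.heat t G).Lout = G.Lout + t * (if p then 1 else 0) ∧
    (WT.heat t G).Rout = G.Rout - t * (if p then 1 else 0) := by
  induction hG with
  | int n =>
    constructor <;> simp [WT.heat, WT.Lout, WT.Rout, WT.out]
  | @node L R p hL hR hLp hRp ihL ihR =>
    have key1 : ((L.attach.map fun g => (WT.int t).add (WT.heat t g.1)).map fun g => g.out.2)
        = L.map fun g => (t - t * (if p then 1 else 0)) + g.out.2 := by
      simp only [List.map_attach_eq_pmap, List.map_map, List.map_pmap]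
      rw [List.pmap_eq_map]
      apply List.map_congr_left
      intro a ha
      have h1 := WT.add_int_out t (WT.isWT_heat t (hLp a ha))
      have h2 := (ihL a ha).2
      simp only [WT.Rout] at h2
      simp only [Function.comp_apply, h1, h2]
      ring
    have key2 : ((R.attach.map fun g => (WT.int (-t)).add (WT.heat t g.1)).map fun g => g.out.1)
        = R.map fun g => (-t + t * (if p then 1 else 0)) + g.out.1 := by
      simp only [List.map_attach_eq_pmap, List.map_map, List.map_pmap]
      rw [List.pmap_eq_map]
      apply List.map_congr_left
      intro a ha
      have h1 := WT.add_int_out (-t) (WT.isWT_heat t (hRp a ha))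
      have h2 := (ihR a ha).1
      simp only [WT.Lout] at h2
      simp only [Function.comp_apply, h1, h2]
      ring
    simp only [WT.Lout, WT.Rout, WT.heat_node, WT.node_out]
    rw [key1, key2]
    have eL : (L.map fun g => (t - t * (if p then 1 else 0)) + g.out.2)
        = (L.map fun g => g.out.2).map ((t - t * (if p then 1 else 0)) + ·) := by
      simp [List.map_map]
    have eR : (R.map fun g => (-t + t * (if p then 1 else 0)) + g.out.1)
        = (R.map fun g => g.out.1).map ((-t + t * (if p then 1 else 0)) + ·) := by
      simp [List.map_map]
    rw [eL, eR, WT.lmax_map_add _ _ (by simpa using hL), WT.lmin_map_add _ _ (by simpa using hR)]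
    cases p <;> constructor <;> simp <;> ring
end

section
/- For well-tempered scoring games G and H: gap_0(G + H) ≤ gap_0(G) + gap_0(H), and gap_1(G + H) ≤ max(gap_1(G), gap_1(H)). -/
namespace WT

/-! ### foldl max/min and lmax/lmin lemmas -/

theorem le_foldl_max (a : ℤ) (l : List ℤ) : a ≤ l.foldl max a := by
  induction l generalizing a with
  | nil => simp
  | cons x xs ih => exact le_trans (le_max_left a x) (ih _)

theorem mem_le_foldl_max {b : ℤ} (a : ℤ) {l : List ℤ} (h : b ∈ l) : b ≤ l.foldl max a := by
  induction l generalizing a with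
  | nil => simp at h
  | cons x xs ih =>
    rcases List.mem_cons.1 h with rfl | h'
    · exact le_trans (le_max_right a b) (le_foldl_max _ _)
    · exact ih _ h'

theorem foldl_max_le {b : ℤ} {l : List ℤ} (a : ℤ) (ha : a ≤ b) (h : ∀ x ∈ l, x ≤ b) :
    l.foldl max a ≤ b := by
  induction l generalizing a with
  | nil => simpa
  | cons x xs ih =>
    exact ih _ (max_le ha (h x (by simp))) (fun y hy => h y (by simp [hy]))

theorem foldl_max_mem (a : ℤ) (l : List ℤ) : l.foldl max a = a ∨ l.foldl max a ∈ l := by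
  induction l generalizing a with
  | nil => exact Or.inl rfl
  | cons x xs ih =>
    rcases ih (max a x) with h | h
    · rcases max_choice a x with h' | h'
      · exact Or.inl (by rw [List.foldl_cons, h, h'])
      · exact Or.inr (by rw [List.foldl_cons, h, h']; simp)
    · exact Or.inr (by simp [h])

theorem le_lmax {b : ℤ} {l : List ℤ} (h : b ∈ l) : b ≤ lmax l := by
  cases l with
  | nil => simp at h
  | cons x xs =>
    rcases List.mem_cons.1 h with rfl | h'
    · exact le_foldl_max _ _
    · exact mem_le_foldl_max _ h'

theorem lmax_le {b : ℤ} {l : List ℤ} (hne : l ≠ []) (h : ∀ x ∈ l, x ≤ b) : lmax l ≤ b := by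
  cases l with
  | nil => exact absurd rfl hne
  | cons x xs => exact foldl_max_le x (h x (by simp)) (fun y hy => h y (by simp [hy]))

theorem lmax_mem {l : List ℤ} (hne : l ≠ []) : lmax l ∈ l := by
  cases l with
  | nil => exact absurd rfl hne
  | cons x xs =>
    rcases foldl_max_mem x xs with h | h
    · rw [lmax, h]; simp
    · exact List.mem_cons_of_mem _ h

theorem foldl_min_le (a : ℤ) (l : List ℤ) : l.foldl min a ≤ a := by
  induction l generalizing a with
  | nil => simp
  | cons x xs ih => exact le_trans (ih _) (min_le_left a x)

theorem foldl_min_le_mem {b : ℤ} (a : ℤ) {l : List ℤ} (h : b ∈ l) : l.foldl min a ≤ b := by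
  induction l generalizing a with
  | nil => simp at h
  | cons x xs ih =>
    rcases List.mem_cons.1 h with rfl | h'
    · exact le_trans (foldl_min_le (min a b) xs) (min_le_right a b)
    · exact ih _ h'

theorem le_foldl_min {b : ℤ} {l : List ℤ} (a : ℤ) (ha : b ≤ a) (h : ∀ x ∈ l, b ≤ x) :
    b ≤ l.foldl min a := by
  induction l generalizing a with
  | nil => simpa
  | cons x xs ih =>
    exact ih _ (le_min ha (h x (by simp))) (fun y hy => h y (by simp [hy]))

theorem foldl_min_mem (a : ℤ) (l : List ℤ) : l.foldl min a = a ∨ l.foldl min a ∈ l := by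
  induction l generalizing a with
  | nil => exact Or.inl rfl
  | cons x xs ih =>
    rcases ih (min a x) with h | h
    · rcases min_choice a x with h' | h'
      · exact Or.inl (by rw [List.foldl_cons, h, h'])
      · exact Or.inr (by rw [List.foldl_cons, h, h']; simp)
    · exact Or.inr (by simp [h])

theorem lmin_le {b : ℤ} {l : List ℤ} (h : b ∈ l) : lmin l ≤ b := by
  cases l with
  | nil => simp at h
  | cons x xs =>
    rcases List.mem_cons.1 h with rfl | h'
    · exact foldl_min_le _ _
    · exact foldl_min_le_mem _ h'

theorem le_lmin {b : ℤ} {l : List ℤ} (hne : l ≠ []) (h : ∀ x ∈ l, b ≤ x) : b ≤ lmin l := by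
  cases l with
  | nil => exact absurd rfl hne
  | cons x xs => exact le_foldl_min x (h x (by simp)) (fun y hy => h y (by simp [hy]))

theorem lmin_mem {l : List ℤ} (hne : l ≠ []) : lmin l ∈ l := by
  cases l with
  | nil => exact absurd rfl hne
  | cons x xs =>
    rcases foldl_min_mem x xs with h | h
    · rw [lmin, h]; simp
    · exact List.mem_cons_of_mem _ h

/-! ### unfolding out and add -/

theorem out_int (n : ℤ) : out (int n) = (n, n) := by simp [out]

theorem out_node (L R : List WT) :
    out (node L R) = (lmax (L.map fun g => (out g).2), lmin (R.map fun g => (out g).1)) := by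
  rw [out]
  simp [lopts, ropts]

theorem Lout_node (L R : List WT) : Lout (node L R) = lmax (L.map Rout) := by
  simp only [Lout, out_node]
  rfl

theorem Rout_node (L R : List WT) : Rout (node L R) = lmin (R.map Lout) := by
  simp only [Rout, out_node]
  rfl

theorem add_int_int (m n : ℤ) : (int m).add (int n) = int (m + n) := by
  rw [add]

theorem add_node_left (L R : List WT) (H : WT) :
    (node L R).add H =
      node ((L.map fun g => g.add H) ++ (H.lopts.map fun h => (node L R).add h))
           ((R.map fun g => g.add H) ++ (H.ropts.map fun h => (node L R).add h)) := by
  rw [add]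
  · simp [lopts, ropts]
  · intro m n h1 h2; simp at h1

theorem add_node_right (G : WT) (L R : List WT) :
    G.add (node L R) =
      node ((G.lopts.map fun g => g.add (node L R)) ++ (L.map fun h => G.add h))
           ((G.ropts.map fun g => g.add (node L R)) ++ (R.map fun h => G.add h)) := by
  cases G with
  | int m =>
    rw [add]
    · simp [lopts, ropts]
    · intro m' n h1 h2; simp at h2
  | node L' R' =>
    rw [add]
    · simp [lopts, ropts]
    · intro m' n h1 h2; simp at h1

end WT

namespace WT

theorem one_le_sizeOf (G : WT) : 1 ≤ sizeOf G := by cases G <;> simp <;> omega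

/-! ### IsWT helpers -/

theorem isWT_node_ne_left {L R : List WT} {p : Bool} (h : IsWT (node L R) p) : L ≠ [] := by
  cases h with | node hL hR hLp hRp => exact hL

theorem isWT_node_ne_right {L R : List WT} {p : Bool} (h : IsWT (node L R) p) : R ≠ [] := by
  cases h with | node hL hR hLp hRp => exact hR

theorem isWT_mem_left {L R : List WT} {p : Bool} (h : IsWT (node L R) p) {g : WT}
    (hg : g ∈ L) : IsWT g (!p) := by
  cases h with | node hL hR hLp hRp => simpa using hLp g hg

theorem isWT_mem_right {L R : List WT} {p : Bool} (h : IsWT (node L R) p) {g : WT}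
    (hg : g ∈ R) : IsWT g (!p) := by
  cases h with | node hL hR hLp hRp => simpa using hRp g hg

theorem isWT_int_false {n : ℤ} {p : Bool} (h : IsWT (int n) p) : p = false := by
  cases h; rfl

theorem isWT_unique : ∀ (G : WT) (p q : Bool), IsWT G p → IsWT G q → p = q
  | int n, p, q, hp, hq => by rw [isWT_int_false hp, isWT_int_false hq]
  | node L R, p, q, hp, hq => by
    obtain ⟨g, hg⟩ := List.exists_mem_of_ne_nil L (isWT_node_ne_left hp)
    have h1 := isWT_mem_left hp hg
    have h2 := isWT_mem_left hq hg
    have := isWT_unique g (!p) (!q) h1 h2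
    simpa using this
termination_by G => sizeOf G
decreasing_by exact sizeOf_lt_of_mem_lopts (by simpa [lopts] using hg)

/-! ### shift lemmas -/

theorem foldl_max_map_add (n : ℤ) : ∀ (l : List ℤ) (a : ℤ),
    (l.map (· + n)).foldl max (a + n) = l.foldl max a + n
  | [], a => by simp
  | x :: xs, a => by
    have : max (a + n) (x + n) = max a x + n := by omega
    simp only [List.map_cons, List.foldl_cons, this]
    exact foldl_max_map_add n xs (max a x)

theorem foldl_min_map_add (n : ℤ) : ∀ (l : List ℤ) (a : ℤ),
    (l.map (· + n)).foldl min (a + n) = l.foldl min a + n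
  | [], a => by simp
  | x :: xs, a => by
    have : min (a + n) (x + n) = min a x + n := by omega
    simp only [List.map_cons, List.foldl_cons, this]
    exact foldl_min_map_add n xs (min a x)

theorem lmax_map_add_s5 {l : List ℤ} (hne : l ≠ []) (n : ℤ) : lmax (l.map (· + n)) = lmax l + n := by
  cases l with
  | nil => exact absurd rfl hne
  | cons x xs => exact foldl_max_map_add n xs x

theorem lmin_map_add_s5 {l : List ℤ} (hne : l ≠ []) (n : ℤ) : lmin (l.map (· + n)) = lmin l + n := by
  cases l with
  | nil => exact absurd rfl hne
  | cons x xs => exact foldl_min_map_add n xs x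

theorem out_add_int : ∀ (G : WT) (p : Bool) (n : ℤ), IsWT G p →
    out (G.add (int n)) = (Lout G + n, Rout G + n)
  | int m, p, n, h => by
    rw [add_int_int, out_int, Lout, Rout, out_int]
  | node L R, p, n, h => by
    rw [add_node_left]
    simp only [lopts, ropts, List.map_nil, List.append_nil, out_node, Lout_node, Rout_node]
    have hL : ∀ g ∈ L, Rout (g.add (int n)) = Rout g + n := by
      intro g hg
      have := out_add_int g (!p) n (isWT_mem_left h hg)
      simp [Rout, this]
    have hR : ∀ g ∈ R, Lout (g.add (int n)) = Lout g + n := by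
      intro g hg
      have := out_add_int g (!p) n (isWT_mem_right h hg)
      simp [Lout, this]
    have e1 : (L.map fun g => g.add (int n)).map (fun g => (out g).2)
        = (L.map Rout).map (· + n) := by
      simp only [List.map_map, List.map_inj_left]
      intro g hg
      exact hL g hg
    have e2 : (R.map fun g => g.add (int n)).map (fun g => (out g).1)
        = (R.map Lout).map (· + n) := by
      simp only [List.map_map, List.map_inj_left]
      intro g hg
      exact hR g hg
    rw [e1, e2, lmax_map_add_s5 (by simpa using isWT_node_ne_left h),
      lmin_map_add_s5 (by simpa using isWT_node_ne_right h)]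
termination_by G => sizeOf G
decreasing_by
  · exact sizeOf_lt_of_mem_lopts (by simpa [lopts] using hg)
  · exact sizeOf_lt_of_mem_ropts (by simpa [ropts] using hg)

theorem out_int_add : ∀ (G : WT) (p : Bool) (n : ℤ), IsWT G p →
    out ((int n).add G) = (n + Lout G, n + Rout G)
  | int m, p, n, h => by
    rw [add_int_int, out_int, Lout, Rout, out_int]
  | node L R, p, n, h => by
    rw [add_node_right]
    simp only [lopts, ropts, List.map_nil, List.nil_append, out_node, Lout_node, Rout_node]
    have e1 : (L.map fun g => (int n).add g).map (fun g => (out g).2)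
        = (L.map Rout).map (· + n) := by
      simp only [List.map_map, List.map_inj_left]
      intro g hg
      have := out_int_add g (!p) n (isWT_mem_left h hg)
      simp only [Function.comp_apply, Rout, this]
      omega
    have e2 : (R.map fun g => (int n).add g).map (fun g => (out g).1)
        = (R.map Lout).map (· + n) := by
      simp only [List.map_map, List.map_inj_left]
      intro g hg
      have := out_int_add g (!p) n (isWT_mem_right h hg)
      simp only [Function.comp_apply, Lout, this]
      omega
    rw [e1, e2, lmax_map_add_s5 (by simpa using isWT_node_ne_left h),
      lmin_map_add_s5 (by simpa using isWT_node_ne_right h)]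
    rw [Prod.mk.injEq]
    omega
termination_by G => sizeOf G
decreasing_by
  · exact sizeOf_lt_of_mem_lopts (by simpa [lopts] using hg)
  · exact sizeOf_lt_of_mem_ropts (by simpa [ropts] using hg)

theorem Lout_add_int {G : WT} {p : Bool} (h : IsWT G p) (n : ℤ) :
    Lout (G.add (int n)) = Lout G + n := by
  simp [Lout, out_add_int G p n h]

theorem Rout_add_int {G : WT} {p : Bool} (h : IsWT G p) (n : ℤ) :
    Rout (G.add (int n)) = Rout G + n := by
  simp [Rout, out_add_int G p n h]

theorem Lout_int_add {G : WT} {p : Bool} (h : IsWT G p) (n : ℤ) :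
    Lout ((int n).add G) = n + Lout G := by
  simp [Lout, out_int_add G p n h]

theorem Rout_int_add {G : WT} {p : Bool} (h : IsWT G p) (n : ℤ) :
    Rout ((int n).add G) = n + Rout G := by
  simp [Rout, out_int_add G p n h]

end WT

namespace WT

/-! ### Subgame lemmas -/

theorem subgame_trans : ∀ {A B C : WT}, Subgame A B → Subgame B C → Subgame A C := by
  intro A B C hab hbc
  induction hbc with
  | refl => exact hab
  | left hmem _ ih => exact Subgame.left hmem ih
  | right hmem _ ih => exact Subgame.right hmem ih

theorem subgame_of_mem_lopts {G g : WT} (h : g ∈ G.lopts) : Subgame g G := by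
  cases G with
  | int n => simp [lopts] at h
  | node L R => exact Subgame.left (by simpa [lopts] using h) (Subgame.refl g)

theorem subgame_of_mem_ropts {G g : WT} (h : g ∈ G.ropts) : Subgame g G := by
  cases G with
  | int n => simp [ropts] at h
  | node L R => exact Subgame.right (by simpa [ropts] using h) (Subgame.refl g)

theorem subgame_isWT : ∀ {K G : WT}, Subgame K G → ∀ p, IsWT G p → ∃ q, IsWT K q := by
  intro K G hsub
  induction hsub with
  | refl => exact fun p hp => ⟨p, hp⟩
  | left hmem _ ih => exact fun p hp => ih _ (isWT_mem_left hp hmem)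
  | right hmem _ ih => exact fun p hp => ih _ (isWT_mem_right hp hmem)

theorem exists_int_subgame : ∀ (G : WT) (p : Bool), IsWT G p → ∃ n : ℤ, Subgame (int n) G
  | int n, p, _ => ⟨n, Subgame.refl _⟩
  | node L R, p, h => by
    obtain ⟨g, hg⟩ := List.exists_mem_of_ne_nil L (isWT_node_ne_left h)
    obtain ⟨n, hn⟩ := exists_int_subgame g (!p) (isWT_mem_left h hg)
    exact ⟨n, Subgame.left hg hn⟩
termination_by G => sizeOf G
decreasing_by exact sizeOf_lt_of_mem_lopts (by simpa [lopts] using hg)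

theorem subgame_int {K : WT} {n : ℤ} (h : Subgame K (int n)) : K = int n := by
  cases h with
  | refl => rfl

/-! ### parity of sums -/

theorem isWT_add : ∀ (G H : WT) (p q : Bool), IsWT G p → IsWT H q → IsWT (G.add H) (xor p q)
  | int m, int n, p, q, hp, hq => by
    rw [add_int_int, isWT_int_false hp, isWT_int_false hq]
    exact IsWT.int _
  | int m, node L R, p, q, hp, hq => by
    rw [add_node_right]
    simp only [lopts, ropts, List.map_nil, List.nil_append]
    have hx : xor p q = !(xor p (!q)) := by cases p <;> cases q <;> rfl
    rw [hx]
    refine IsWT.node (by simpa using isWT_node_ne_left hq) (by simpa using isWT_node_ne_right hq)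
      ?_ ?_
    · intro g hg
      obtain ⟨g', hg', rfl⟩ := List.mem_map.1 hg
      exact isWT_add _ _ p (!q) hp (isWT_mem_left hq hg')
    · intro g hg
      obtain ⟨g', hg', rfl⟩ := List.mem_map.1 hg
      exact isWT_add _ _ p (!q) hp (isWT_mem_right hq hg')
  | node L R, H, p, q, hp, hq => by
    rw [add_node_left]
    have hx : xor p q = !(xor (!p) q) := by cases p <;> cases q <;> rfl
    rw [hx]
    refine IsWT.node ?_ ?_ ?_ ?_
    · simp only [ne_eq, List.append_eq_nil_iff, List.map_eq_nil_iff, not_and]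
      intro hL; exact absurd hL (isWT_node_ne_left hp)
    · simp only [ne_eq, List.append_eq_nil_iff, List.map_eq_nil_iff, not_and]
      intro hR; exact absurd hR (isWT_node_ne_right hp)
    · intro g hg
      rcases List.mem_append.1 hg with hg' | hg'
      · obtain ⟨g', hgm, rfl⟩ := List.mem_map.1 hg'
        exact isWT_add _ _ (!p) q (isWT_mem_left hp hgm) hq
      · obtain ⟨g', hgm, rfl⟩ := List.mem_map.1 hg'
        have : IsWT g' (!q) := by
          cases H with
          | int n => simp [lopts] at hgm
          | node L' R' => exact isWT_mem_left hq (by simpa [lopts] using hgm)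
        have e : xor (!p) q = xor p (!q) := by cases p <;> cases q <;> rfl
        rw [e]
        exact isWT_add _ _ p (!q) hp this
    · intro g hg
      rcases List.mem_append.1 hg with hg' | hg'
      · obtain ⟨g', hgm, rfl⟩ := List.mem_map.1 hg'
        exact isWT_add _ _ (!p) q (isWT_mem_right hp hgm) hq
      · obtain ⟨g', hgm, rfl⟩ := List.mem_map.1 hg'
        have : IsWT g' (!q) := by
          cases H with
          | int n => simp [ropts] at hgm
          | node L' R' => exact isWT_mem_right hq (by simpa [ropts] using hgm)
        have e : xor (!p) q = xor p (!q) := by cases p <;> cases q <;> rfl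
        rw [e]
        exact isWT_add _ _ p (!q) hp this
termination_by G H => sizeOf G + sizeOf H
decreasing_by
  all_goals
    first
      | (have := sizeOf_lt_of_mem_lopts (G := node L R) (by simpa [lopts] using hg'); omega)
      | (have := sizeOf_lt_of_mem_ropts (G := node L R) (by simpa [ropts] using hg'); omega)
      | (have h1 := sizeOf_lt_of_mem_lopts hgm; omega)
      | (have h1 := sizeOf_lt_of_mem_ropts hgm; omega)
      | (have h1 := sizeOf_lt_of_mem_lopts (G := node L R) (g := g') (by simpa [lopts] using hgm); omega)
      | (have h1 := sizeOf_lt_of_mem_ropts (G := node L R) (g := g') (by simpa [ropts] using hgm); omega)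

end WT

namespace WT

/-! ### decomposition of subgames of a sum -/

theorem subgame_add_decomp : ∀ (G H K : WT), Subgame K (G.add H) →
    ∃ G' H', Subgame G' G ∧ Subgame H' H ∧ K = G'.add H'
  | int m, int n, K, h => by
    rw [add_int_int] at h
    exact ⟨int m, int n, Subgame.refl _, Subgame.refl _, by rw [subgame_int h, add_int_int]⟩
  | node L R, H, K, h => by
    rw [add_node_left] at h
    cases h with
    | refl => exact ⟨node L R, H, Subgame.refl _, Subgame.refl _, (add_node_left L R H).symm⟩
    | left hmem hsub =>
      rcases List.mem_append.1 hmem with hm | hm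
      · obtain ⟨g', hg', rfl⟩ := List.mem_map.1 hm
        obtain ⟨G', H', h1, h2, h3⟩ := subgame_add_decomp g' H K hsub
        exact ⟨G', H', subgame_trans h1 (Subgame.left hg' (Subgame.refl _)), h2, h3⟩
      · obtain ⟨h', hh', rfl⟩ := List.mem_map.1 hm
        obtain ⟨G', H', h1, h2, h3⟩ := subgame_add_decomp (node L R) h' K hsub
        exact ⟨G', H', h1, subgame_trans h2 (subgame_of_mem_lopts hh'), h3⟩
    | right hmem hsub =>
      rcases List.mem_append.1 hmem with hm | hm
      · obtain ⟨g', hg', rfl⟩ := List.mem_map.1 hm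
        obtain ⟨G', H', h1, h2, h3⟩ := subgame_add_decomp g' H K hsub
        exact ⟨G', H', subgame_trans h1 (Subgame.right hg' (Subgame.refl _)), h2, h3⟩
      · obtain ⟨h', hh', rfl⟩ := List.mem_map.1 hm
        obtain ⟨G', H', h1, h2, h3⟩ := subgame_add_decomp (node L R) h' K hsub
        exact ⟨G', H', h1, subgame_trans h2 (subgame_of_mem_ropts hh'), h3⟩
  | int m, node L' R', K, h => by
    rw [add_node_right] at h
    simp only [lopts, ropts, List.map_nil, List.nil_append] at h
    cases h with
    | refl =>
      refine ⟨int m, node L' R', Subgame.refl _, Subgame.refl _, ?_⟩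
      rw [add_node_right]
      simp [lopts, ropts]
    | left hmem hsub =>
      obtain ⟨h', hh', rfl⟩ := List.mem_map.1 hmem
      obtain ⟨G', H', h1, h2, h3⟩ := subgame_add_decomp (int m) h' K hsub
      exact ⟨G', H', h1, subgame_trans h2 (Subgame.left hh' (Subgame.refl _)), h3⟩
    | right hmem hsub =>
      obtain ⟨h', hh', rfl⟩ := List.mem_map.1 hmem
      obtain ⟨G', H', h1, h2, h3⟩ := subgame_add_decomp (int m) h' K hsub
      exact ⟨G', H', h1, subgame_trans h2 (Subgame.right hh' (Subgame.refl _)), h3⟩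
termination_by G H K => sizeOf G + sizeOf H
decreasing_by
  all_goals
    first
      | (have := sizeOf_lt_of_mem_lopts (G := node L R) (g := g') (by simpa [lopts] using hg'); omega)
      | (have := sizeOf_lt_of_mem_ropts (G := node L R) (g := g') (by simpa [ropts] using hg'); omega)
      | (have := sizeOf_lt_of_mem_lopts hh'; omega)
      | (have := sizeOf_lt_of_mem_ropts hh'; omega)
      | (have := sizeOf_lt_of_mem_lopts (G := node L' R') (g := h') (by simpa [lopts] using hh'); omega)
      | (have := sizeOf_lt_of_mem_ropts (G := node L' R') (g := h') (by simpa [ropts] using hh'); omega)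

/-! ### the gap set -/

/-- The set whose supremum is `gap G p`. -/
def Sg (G : WT) (p : Bool) : Set (WithBot ℤ) :=
  {x : WithBot ℤ | ∃ H : WT, Subgame H G ∧ IsWT H p ∧ x = ((H.Rout - H.Lout : ℤ) : WithBot ℤ)}

theorem gap_eq (G : WT) (p : Bool) : gap G p = sSup (Sg G p) := rfl

theorem Sg_finite : ∀ (G : WT) (p : Bool), (Sg G p).Finite
  | int n, p => by
    apply Set.Finite.subset (Set.finite_singleton (((int n).Rout - (int n).Lout : ℤ) : WithBot ℤ))
    rintro x ⟨K, hsub, hK, rfl⟩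
    rw [subgame_int hsub]
    simp
  | node L R, p => by
    have hsub : Sg (node L R) p ⊆
        insert ((((node L R).Rout - (node L R).Lout : ℤ)) : WithBot ℤ)
          (⋃ g ∈ {x | x ∈ L ++ R}, Sg g p) := by
      rintro x ⟨K, hsub, hK, rfl⟩
      cases hsub with
      | refl => exact Set.mem_insert _ _
      | left hmem hsub' =>
        refine Set.mem_insert_of_mem _ ?_
        refine Set.mem_biUnion (by simp [hmem]) ⟨K, hsub', hK, rfl⟩
      | right hmem hsub' =>
        refine Set.mem_insert_of_mem _ ?_
        refine Set.mem_biUnion (by simp [hmem]) ⟨K, hsub', hK, rfl⟩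
    refine Set.Finite.subset (Set.Finite.insert _ (Set.Finite.biUnion (List.finite_toSet _) ?_)) hsub
    intro g hg
    exact Sg_finite g p
termination_by G p => sizeOf G
decreasing_by
  rcases List.mem_append.1 hg with h | h
  · exact sizeOf_lt_of_mem_lopts (G := node L R) (by simpa [lopts] using h)
  · exact sizeOf_lt_of_mem_ropts (G := node L R) (by simpa [ropts] using h)

theorem gap_bddAbove (G : WT) (p : Bool) : BddAbove (Sg G p) := (Sg_finite G p).bddAbove

theorem delta_le_gap {G : WT} {p : Bool} (h : IsWT G p) :
    ((G.Rout - G.Lout : ℤ) : WithBot ℤ) ≤ gap G p :=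
  le_csSup (gap_bddAbove G p) ⟨G, Subgame.refl G, h, rfl⟩

theorem gap_mono {K G : WT} (h : Subgame K G) (p : Bool) : gap K p ≤ gap G p := by
  rcases Set.eq_empty_or_nonempty (Sg K p) with he | hne
  · rw [gap_eq, he, WithBot.sSup_empty]
    exact bot_le
  · refine csSup_le_csSup (gap_bddAbove G p) hne ?_
    rintro x ⟨K', hsub, hK', rfl⟩
    exact ⟨K', subgame_trans hsub h, hK', rfl⟩

/-! ### WithBot arithmetic helpers -/

theorem wb_le_add_iff {a b : ℤ} {c : WithBot ℤ} :
    (a : WithBot ℤ) ≤ (b : WithBot ℤ) + c ↔ ((a - b : ℤ) : WithBot ℤ) ≤ c := by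
  cases c with
  | bot => simp
  | coe c =>
    rw [← WithBot.coe_add, WithBot.coe_le_coe, WithBot.coe_le_coe]
    omega

theorem wb_coe_mono {a b : ℤ} (h : a ≤ b) : (a : WithBot ℤ) ≤ (b : WithBot ℤ) :=
  WithBot.coe_le_coe.2 h

end WT

namespace WT

/-! ### outcome/option interface for single games and sums -/

theorem Rout_le_Lout_of_mem_lopts {G g : WT} (hg : g ∈ G.lopts) : Rout g ≤ Lout G := by
  cases G with
  | int n => simp [lopts] at hg
  | node L R =>
    rw [Lout_node]
    exact le_lmax (List.mem_map.2 ⟨g, by simpa [lopts] using hg, rfl⟩)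

theorem Rout_le_Lout_of_mem_ropts {G g : WT} (hg : g ∈ G.ropts) : Rout G ≤ Lout g := by
  cases G with
  | int n => simp [ropts] at hg
  | node L R =>
    rw [Rout_node]
    exact lmin_le (List.mem_map.2 ⟨g, by simpa [ropts] using hg, rfl⟩)

theorem exists_lopt_eq {G : WT} (hne : G.lopts ≠ []) : ∃ g ∈ G.lopts, Lout G = Rout g := by
  cases G with
  | int n => simp [lopts] at hne
  | node L R =>
    rw [Lout_node]
    have hL : L ≠ [] := by simpa [lopts] using hne
    have : lmax (L.map Rout) ∈ L.map Rout := lmax_mem (by simp [hL])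
    obtain ⟨g, hg, he⟩ := List.mem_map.1 this
    exact ⟨g, by simpa [lopts] using hg, he.symm⟩

theorem exists_ropt_eq {G : WT} (hne : G.ropts ≠ []) : ∃ g ∈ G.ropts, Rout G = Lout g := by
  cases G with
  | int n => simp [ropts] at hne
  | node L R =>
    rw [Rout_node]
    have hR : R ≠ [] := by simpa [ropts] using hne
    have : lmin (R.map Lout) ∈ R.map Lout := lmin_mem (by simp [hR])
    obtain ⟨g, hg, he⟩ := List.mem_map.1 this
    exact ⟨g, by simpa [ropts] using hg, he.symm⟩

theorem Rout_add_le_l {G H g : WT} (hg : g ∈ G.ropts) : Rout (G.add H) ≤ Lout (g.add H) := by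
  cases G with
  | int n => simp [ropts] at hg
  | node L R =>
    rw [add_node_left, Rout_node]
    refine lmin_le (List.mem_map.2 ⟨g.add H, List.mem_append_left _
      (List.mem_map.2 ⟨g, by simpa [ropts] using hg, rfl⟩), rfl⟩)

theorem Rout_add_le_r {G H h' : WT} (hh : h' ∈ H.ropts) : Rout (G.add H) ≤ Lout (G.add h') := by
  cases H with
  | int n => simp [ropts] at hh
  | node L R =>
    rw [add_node_right, Rout_node]
    refine lmin_le (List.mem_map.2 ⟨G.add h', List.mem_append_right _
      (List.mem_map.2 ⟨h', by simpa [ropts] using hh, rfl⟩), rfl⟩)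

theorem le_Lout_add_l {G H g : WT} (hg : g ∈ G.lopts) : Rout (g.add H) ≤ Lout (G.add H) := by
  cases G with
  | int n => simp [lopts] at hg
  | node L R =>
    rw [add_node_left, Lout_node]
    refine le_lmax (List.mem_map.2 ⟨g.add H, List.mem_append_left _
      (List.mem_map.2 ⟨g, by simpa [lopts] using hg, rfl⟩), rfl⟩)

theorem le_Lout_add_r {G H h' : WT} (hh : h' ∈ H.lopts) : Rout (G.add h') ≤ Lout (G.add H) := by
  cases H with
  | int n => simp [lopts] at hh
  | node L R =>
    rw [add_node_right, Lout_node]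
    refine le_lmax (List.mem_map.2 ⟨G.add h', List.mem_append_right _
      (List.mem_map.2 ⟨h', by simpa [lopts] using hh, rfl⟩), rfl⟩)

theorem Lout_add_attained {G H : WT} (hne : G.lopts ≠ [] ∨ H.lopts ≠ []) :
    (∃ g ∈ G.lopts, Lout (G.add H) = Rout (g.add H)) ∨
    (∃ h' ∈ H.lopts, Lout (G.add H) = Rout (G.add h')) := by
  cases G with
  | node L R =>
    rw [add_node_left, Lout_node]
    set bigL := (L.map fun g => g.add H) ++ (H.lopts.map fun h => (node L R).add h) with hbig
    have hne' : bigL ≠ [] := by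
      rcases hne with h | h
      · simp only [hbig, ne_eq, List.append_eq_nil_iff, List.map_eq_nil_iff, not_and]
        intro hL; exact absurd hL (by simpa [lopts] using h)
      · simp only [hbig, ne_eq, List.append_eq_nil_iff, List.map_eq_nil_iff, not_and]
        intro _; exact fun hL => absurd hL h
    have hmem : lmax (bigL.map Rout) ∈ bigL.map Rout := lmax_mem (by simp [hne'])
    obtain ⟨K, hK, he⟩ := List.mem_map.1 hmem
    rcases List.mem_append.1 hK with hm | hm
    · obtain ⟨g, hg, rfl⟩ := List.mem_map.1 hm
      exact Or.inl ⟨g, by simpa [lopts] using hg, he.symm⟩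
    · obtain ⟨h', hh, rfl⟩ := List.mem_map.1 hm
      exact Or.inr ⟨h', hh, he.symm⟩
  | int n =>
    have hH : H.lopts ≠ [] := by
      rcases hne with h | h
      · simp [lopts] at h
      · exact h
    cases H with
    | int m => simp [lopts] at hH
    | node L' R' =>
      rw [add_node_right, Lout_node]
      simp only [lopts, ropts, List.map_nil, List.nil_append]
      have hmem : lmax ((L'.map fun h => (int n).add h).map Rout)
          ∈ (L'.map fun h => (int n).add h).map Rout := by
        have hL' : L' ≠ [] := by simpa [lopts] using hH
        exact lmax_mem (by simp [hL'])
      obtain ⟨K, hK, he⟩ := List.mem_map.1 hmem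
      obtain ⟨h', hh, rfl⟩ := List.mem_map.1 hK
      exact Or.inr ⟨h', by simpa [lopts] using hh, he.symm⟩

theorem Rout_add_attained {G H : WT} (hne : G.ropts ≠ [] ∨ H.ropts ≠ []) :
    (∃ g ∈ G.ropts, Rout (G.add H) = Lout (g.add H)) ∨
    (∃ h' ∈ H.ropts, Rout (G.add H) = Lout (G.add h')) := by
  cases G with
  | node L R =>
    rw [add_node_left, Rout_node]
    set bigR := (R.map fun g => g.add H) ++ (H.ropts.map fun h => (node L R).add h) with hbig
    have hne' : bigR ≠ [] := by
      rcases hne with h | h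
      · simp only [hbig, ne_eq, List.append_eq_nil_iff, List.map_eq_nil_iff, not_and]
        intro hR; exact absurd hR (by simpa [ropts] using h)
      · simp only [hbig, ne_eq, List.append_eq_nil_iff, List.map_eq_nil_iff, not_and]
        intro _; exact fun hR => absurd hR h
    have hmem : lmin (bigR.map Lout) ∈ bigR.map Lout := lmin_mem (by simp [hne'])
    obtain ⟨K, hK, he⟩ := List.mem_map.1 hmem
    rcases List.mem_append.1 hK with hm | hm
    · obtain ⟨g, hg, rfl⟩ := List.mem_map.1 hm
      exact Or.inl ⟨g, by simpa [ropts] using hg, he.symm⟩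
    · obtain ⟨h', hh, rfl⟩ := List.mem_map.1 hm
      exact Or.inr ⟨h', hh, he.symm⟩
  | int n =>
    have hH : H.ropts ≠ [] := by
      rcases hne with h | h
      · simp [ropts] at h
      · exact h
    cases H with
    | int m => simp [ropts] at hH
    | node L' R' =>
      rw [add_node_right, Rout_node]
      simp only [lopts, ropts, List.map_nil, List.nil_append]
      have hmem : lmin ((R'.map fun h => (int n).add h).map Lout)
          ∈ (R'.map fun h => (int n).add h).map Lout := by
        have hR' : R' ≠ [] := by simpa [ropts] using hH
        exact lmin_mem (by simp [hR'])
      obtain ⟨K, hK, he⟩ := List.mem_map.1 hmem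
      obtain ⟨h', hh, rfl⟩ := List.mem_map.1 hK
      exact Or.inr ⟨h', by simpa [ropts] using hh, he.symm⟩

end WT

namespace WT

theorem isWT_of_mem_lopts {G g : WT} {p : Bool} (h : IsWT G p) (hg : g ∈ G.lopts) :
    IsWT g (!p) := by
  cases G with
  | int n => simp [lopts] at hg
  | node L R => exact isWT_mem_left h (by simpa [lopts] using hg)

theorem isWT_of_mem_ropts {G g : WT} {p : Bool} (h : IsWT G p) (hg : g ∈ G.ropts) :
    IsWT g (!p) := by
  cases G with
  | int n => simp [ropts] at hg
  | node L R => exact isWT_mem_right h (by simpa [ropts] using hg)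

theorem Rout_int (n : ℤ) : Rout (int n) = n := by simp [Rout, out_int]
theorem Lout_int (n : ℤ) : Lout (int n) = n := by simp [Lout, out_int]

/-- The core induction: twelve outcome inequalities for disjunctive sums of
well-tempered games, proved simultaneously. -/
theorem core : ∀ (N : ℕ) (G H : WT) (pG pH : Bool), sizeOf G + sizeOf H ≤ N →
    IsWT G pG → IsWT H pH →
    ((pG = false → pH = true → Rout G + Lout H ≤ Lout (G.add H)) ∧
     (pG = true → pH = false → Lout G + Rout H ≤ Lout (G.add H)) ∧
     (pG = false → pH = false → Rout G + Rout H ≤ Rout (G.add H)) ∧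
     (pG = true → pH = true →
       ((Rout (G.add H) : ℤ) : WithBot ℤ) ≤ ((Lout G + Rout H : ℤ) : WithBot ℤ) + gap H false) ∧
     (pG = false → pH = false →
       ((Rout (G.add H) : ℤ) : WithBot ℤ) ≤ ((Rout G + Lout H : ℤ) : WithBot ℤ) + gap H false) ∧
     (pG = true → pH = false →
       ((Lout (G.add H) : ℤ) : WithBot ℤ) ≤ ((Lout G + Lout H : ℤ) : WithBot ℤ) + gap H false) ∧
     (pG = true → pH = true →
       ((Lout G + Rout H : ℤ) : WithBot ℤ) ≤ ((Lout (G.add H) : ℤ) : WithBot ℤ) + gap G false) ∧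
     (pG = false → pH = false →
       ((Rout G + Lout H : ℤ) : WithBot ℤ) ≤ ((Lout (G.add H) : ℤ) : WithBot ℤ) + gap G false) ∧
     (pG = false → pH = true →
       ((Rout G + Rout H : ℤ) : WithBot ℤ) ≤ ((Rout (G.add H) : ℤ) : WithBot ℤ) + gap G false) ∧
     (pG = false → pH = true →
       ((Rout (G.add H) : ℤ) : WithBot ℤ) ≤ ((Rout G + Lout H : ℤ) : WithBot ℤ) +
         max (gap G true) (gap H true)) ∧
     (pG = true → pH = false →
       ((Rout (G.add H) : ℤ) : WithBot ℤ) ≤ ((Lout G + Rout H : ℤ) : WithBot ℤ) +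
         max (gap G true) (gap H true)) ∧
     (pG = true → pH = true →
       ((Lout (G.add H) : ℤ) : WithBot ℤ) ≤ ((Lout G + Lout H : ℤ) : WithBot ℤ) +
         max (gap G true) (gap H true))) := by
  intro N
  induction N with
  | zero =>
    intro G H pG pH hs _ _
    have := one_le_sizeOf G
    have := one_le_sizeOf H
    omega
  | succ n ih =>
    intro G H pG pH hs hG hH
    have S4 : ∀ G' H', sizeOf G' + sizeOf H' ≤ n → IsWT G' false → IsWT H' true →
        Rout G' + Lout H' ≤ Lout (G'.add H') :=
      fun G' H' h h1 h2 => (ih G' H' false true h h1 h2).1 rfl rfl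
    have S5 : ∀ G' H', sizeOf G' + sizeOf H' ≤ n → IsWT G' true → IsWT H' false →
        Lout G' + Rout H' ≤ Lout (G'.add H') :=
      fun G' H' h h1 h2 => (ih G' H' true false h h1 h2).2.1 rfl rfl
    have S6 : ∀ G' H', sizeOf G' + sizeOf H' ≤ n → IsWT G' false → IsWT H' false →
        Rout G' + Rout H' ≤ Rout (G'.add H') :=
      fun G' H' h h1 h2 => (ih G' H' false false h h1 h2).2.2.1 rfl rfl
    have S7 : ∀ G' H', sizeOf G' + sizeOf H' ≤ n → IsWT G' true → IsWT H' true →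
        ((Rout (G'.add H') : ℤ) : WithBot ℤ) ≤ ((Lout G' + Rout H' : ℤ) : WithBot ℤ) + gap H' false :=
      fun G' H' h h1 h2 => (ih G' H' true true h h1 h2).2.2.2.1 rfl rfl
    have S8 : ∀ G' H', sizeOf G' + sizeOf H' ≤ n → IsWT G' false → IsWT H' false →
        ((Rout (G'.add H') : ℤ) : WithBot ℤ) ≤ ((Rout G' + Lout H' : ℤ) : WithBot ℤ) + gap H' false :=
      fun G' H' h h1 h2 => (ih G' H' false false h h1 h2).2.2.2.2.1 rfl rfl
    have S9 : ∀ G' H', sizeOf G' + sizeOf H' ≤ n → IsWT G' true → IsWT H' false →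
        ((Lout (G'.add H') : ℤ) : WithBot ℤ) ≤ ((Lout G' + Lout H' : ℤ) : WithBot ℤ) + gap H' false :=
      fun G' H' h h1 h2 => (ih G' H' true false h h1 h2).2.2.2.2.2.1 rfl rfl
    have S10 : ∀ G' H', sizeOf G' + sizeOf H' ≤ n → IsWT G' true → IsWT H' true →
        ((Lout G' + Rout H' : ℤ) : WithBot ℤ) ≤ ((Lout (G'.add H') : ℤ) : WithBot ℤ) + gap G' false :=
      fun G' H' h h1 h2 => (ih G' H' true true h h1 h2).2.2.2.2.2.2.1 rfl rfl
    have S11 : ∀ G' H', sizeOf G' + sizeOf H' ≤ n → IsWT G' false → IsWT H' false →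
        ((Rout G' + Lout H' : ℤ) : WithBot ℤ) ≤ ((Lout (G'.add H') : ℤ) : WithBot ℤ) + gap G' false :=
      fun G' H' h h1 h2 => (ih G' H' false false h h1 h2).2.2.2.2.2.2.2.1 rfl rfl
    have S12 : ∀ G' H', sizeOf G' + sizeOf H' ≤ n → IsWT G' false → IsWT H' true →
        ((Rout G' + Rout H' : ℤ) : WithBot ℤ) ≤ ((Rout (G'.add H') : ℤ) : WithBot ℤ) + gap G' false :=
      fun G' H' h h1 h2 => (ih G' H' false true h h1 h2).2.2.2.2.2.2.2.2.1 rfl rfl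
    have S13 : ∀ G' H', sizeOf G' + sizeOf H' ≤ n → IsWT G' false → IsWT H' true →
        ((Rout (G'.add H') : ℤ) : WithBot ℤ) ≤ ((Rout G' + Lout H' : ℤ) : WithBot ℤ) +
          max (gap G' true) (gap H' true) :=
      fun G' H' h h1 h2 => (ih G' H' false true h h1 h2).2.2.2.2.2.2.2.2.2.1 rfl rfl
    have S14 : ∀ G' H', sizeOf G' + sizeOf H' ≤ n → IsWT G' true → IsWT H' false →
        ((Rout (G'.add H') : ℤ) : WithBot ℤ) ≤ ((Lout G' + Rout H' : ℤ) : WithBot ℤ) +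
          max (gap G' true) (gap H' true) :=
      fun G' H' h h1 h2 => (ih G' H' true false h h1 h2).2.2.2.2.2.2.2.2.2.2.1 rfl rfl
    have S15 : ∀ G' H', sizeOf G' + sizeOf H' ≤ n → IsWT G' true → IsWT H' true →
        ((Lout (G'.add H') : ℤ) : WithBot ℤ) ≤ ((Lout G' + Lout H' : ℤ) : WithBot ℤ) +
          max (gap G' true) (gap H' true) :=
      fun G' H' h h1 h2 => (ih G' H' true true h h1 h2).2.2.2.2.2.2.2.2.2.2.2 rfl rfl
    clear ih
    refine ⟨?_, ?_, ?_, ?_, ?_, ?_, ?_, ?_, ?_, ?_, ?_, ?_⟩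
    -- S4 : pG = false, pH = true : Rout G + Lout H ≤ Lout (G + H)
    · rintro rfl rfl
      cases H with
      | int m => exact absurd (isWT_int_false hH) (by simp)
      | node L' R' =>
        obtain ⟨h', hh, heq⟩ := exists_lopt_eq (G := node L' R')
          (by simpa [lopts] using isWT_node_ne_left hH)
        have hsz := sizeOf_lt_of_mem_lopts hh
        have hwt : IsWT h' false := by simpa using isWT_of_mem_lopts hH hh
        have h6 := S6 G h' (by omega) hG hwt
        have h2 := le_Lout_add_r (G := G) hh
        omega
    -- S5 : pG = true, pH = false : Lout G + Rout H ≤ Lout (G + H)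
    · rintro rfl rfl
      cases G with
      | int m => exact absurd (isWT_int_false hG) (by simp)
      | node L R =>
        obtain ⟨g, hg, heq⟩ := exists_lopt_eq (G := node L R)
          (by simpa [lopts] using isWT_node_ne_left hG)
        have hsz := sizeOf_lt_of_mem_lopts hg
        have hwt : IsWT g false := by simpa using isWT_of_mem_lopts hG hg
        have h6 := S6 g H (by omega) hwt hH
        have h2 := le_Lout_add_l (H := H) hg
        omega
    -- S6 : pG = false, pH = false : Rout G + Rout H ≤ Rout (G + H)
    · rintro rfl rfl
      have main : (G.ropts ≠ [] ∨ H.ropts ≠ []) → Rout G + Rout H ≤ Rout (G.add H) := by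
        intro hne
        rcases Rout_add_attained hne with ⟨g, hg, heq⟩ | ⟨h', hh, heq⟩
        · have hsz := sizeOf_lt_of_mem_ropts hg
          have hwt : IsWT g true := by simpa using isWT_of_mem_ropts hG hg
          have h5 := S5 g H (by omega) hwt hH
          have h2 := Rout_le_Lout_of_mem_ropts hg
          omega
        · have hsz := sizeOf_lt_of_mem_ropts hh
          have hwt : IsWT h' true := by simpa using isWT_of_mem_ropts hH hh
          have h4 := S4 G h' (by omega) hG hwt
          have h2 := Rout_le_Lout_of_mem_ropts hh
          omega
      cases G with
      | int m =>
        cases H with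
        | int k => simp [add_int_int, Rout, out_int]
        | node L' R' => exact main (Or.inr (by simpa [ropts] using isWT_node_ne_right hH))
      | node L R => exact main (Or.inl (by simpa [ropts] using isWT_node_ne_right hG))
    -- S7 : pG = true, pH = true : ↑R(G+H) ≤ ↑(L G + R H) + gap₀ H
    · rintro rfl rfl
      cases H with
      | int m => exact absurd (isWT_int_false hH) (by simp)
      | node L' R' =>
        obtain ⟨h', hh, heq⟩ := exists_ropt_eq (G := node L' R')
          (by simpa [ropts] using isWT_node_ne_right hH)
        have hsz := sizeOf_lt_of_mem_ropts hh
        have hwt : IsWT h' false := by simpa using isWT_of_mem_ropts hH hh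
        have h9 := S9 G h' (by omega) hG hwt
        have h1 : Rout (G.add (node L' R')) ≤ Lout (G.add h') := Rout_add_le_r hh
        have hmono : gap h' false ≤ gap (node L' R') false :=
          gap_mono (subgame_of_mem_ropts hh) false
        calc ((Rout (G.add (node L' R')) : ℤ) : WithBot ℤ)
            ≤ ((Lout (G.add h') : ℤ) : WithBot ℤ) := wb_coe_mono h1
          _ ≤ ((Lout G + Lout h' : ℤ) : WithBot ℤ) + gap h' false := h9
          _ ≤ ((Lout G + Lout h' : ℤ) : WithBot ℤ) + gap (node L' R') false :=
              add_le_add_right hmono _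
          _ = ((Lout G + Rout (node L' R') : ℤ) : WithBot ℤ) + gap (node L' R') false := by
              rw [heq]
    -- S8 : pG = false, pH = false : ↑R(G+H) ≤ ↑(R G + L H) + gap₀ H
    · rintro rfl rfl
      cases G with
      | int m =>
        rw [Rout_int_add hH m]
        have e : m + Rout H - (Rout (int m) + Lout H) = Rout H - Lout H := by
          rw [Rout_int]; ring
        rw [wb_le_add_iff, e]
        exact delta_le_gap hH
      | node L R =>
        obtain ⟨g, hg, heq⟩ := exists_ropt_eq (G := node L R)
          (by simpa [ropts] using isWT_node_ne_right hG)
        have hsz := sizeOf_lt_of_mem_ropts hg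
        have hwt : IsWT g true := by simpa using isWT_of_mem_ropts hG hg
        have h9 := S9 g H (by omega) hwt hH
        have h1 : Rout ((node L R).add H) ≤ Lout (g.add H) := Rout_add_le_l hg
        calc ((Rout ((node L R).add H) : ℤ) : WithBot ℤ)
            ≤ ((Lout (g.add H) : ℤ) : WithBot ℤ) := wb_coe_mono h1
          _ ≤ ((Lout g + Lout H : ℤ) : WithBot ℤ) + gap H false := h9
          _ = ((Rout (node L R) + Lout H : ℤ) : WithBot ℤ) + gap H false := by rw [heq]
    -- S9 : pG = true, pH = false : ↑L(G+H) ≤ ↑(L G + L H) + gap₀ H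
    · rintro rfl rfl
      cases G with
      | int m => exact absurd (isWT_int_false hG) (by simp)
      | node L R =>
        rcases Lout_add_attained (G := node L R) (H := H)
            (Or.inl (by simpa [lopts] using isWT_node_ne_left hG)) with
          ⟨g, hg, heq⟩ | ⟨h', hh, heq⟩
        · have hsz := sizeOf_lt_of_mem_lopts hg
          have hwt : IsWT g false := by simpa using isWT_of_mem_lopts hG hg
          have h8 := S8 g H (by omega) hwt hH
          have hb : Rout g ≤ Lout (node L R) := Rout_le_Lout_of_mem_lopts hg
          calc ((Lout ((node L R).add H) : ℤ) : WithBot ℤ)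
              = ((Rout (g.add H) : ℤ) : WithBot ℤ) := by rw [heq]
            _ ≤ ((Rout g + Lout H : ℤ) : WithBot ℤ) + gap H false := h8
            _ ≤ ((Lout (node L R) + Lout H : ℤ) : WithBot ℤ) + gap H false :=
                add_le_add_left (wb_coe_mono (by omega)) _
        · have hsz := sizeOf_lt_of_mem_lopts hh
          have hwt : IsWT h' true := by simpa using isWT_of_mem_lopts hH hh
          have h7 := S7 (node L R) h' (by omega) hG hwt
          have hb : Rout h' ≤ Lout H := Rout_le_Lout_of_mem_lopts hh
          have hmono : gap h' false ≤ gap H false := gap_mono (subgame_of_mem_lopts hh) false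
          calc ((Lout ((node L R).add H) : ℤ) : WithBot ℤ)
              = ((Rout ((node L R).add h') : ℤ) : WithBot ℤ) := by rw [heq]
            _ ≤ ((Lout (node L R) + Rout h' : ℤ) : WithBot ℤ) + gap h' false := h7
            _ ≤ ((Lout (node L R) + Lout H : ℤ) : WithBot ℤ) + gap H false :=
                add_le_add (wb_coe_mono (by omega)) hmono
    -- S10 : pG = true, pH = true : ↑(L G + R H) ≤ ↑L(G+H) + gap₀ G
    · rintro rfl rfl
      cases G with
      | int m => exact absurd (isWT_int_false hG) (by simp)
      | node L R =>
        obtain ⟨g, hg, heq⟩ := exists_lopt_eq (G := node L R)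
          (by simpa [lopts] using isWT_node_ne_left hG)
        have hsz := sizeOf_lt_of_mem_lopts hg
        have hwt : IsWT g false := by simpa using isWT_of_mem_lopts hG hg
        have h12 := S12 g H (by omega) hwt hH
        have hb : Rout (g.add H) ≤ Lout ((node L R).add H) := le_Lout_add_l hg
        have hmono : gap g false ≤ gap (node L R) false := gap_mono (subgame_of_mem_lopts hg) false
        calc ((Lout (node L R) + Rout H : ℤ) : WithBot ℤ)
            = ((Rout g + Rout H : ℤ) : WithBot ℤ) := by rw [heq]
          _ ≤ ((Rout (g.add H) : ℤ) : WithBot ℤ) + gap g false := h12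
          _ ≤ ((Lout ((node L R).add H) : ℤ) : WithBot ℤ) + gap (node L R) false :=
              add_le_add (wb_coe_mono hb) hmono
    -- S11 : pG = false, pH = false : ↑(R G + L H) ≤ ↑L(G+H) + gap₀ G
    · rintro rfl rfl
      cases H with
      | int m =>
        rw [Lout_add_int hG m]
        have e : Rout G + Lout (int m) - (Lout G + m) = Rout G - Lout G := by
          rw [Lout_int]; ring
        rw [wb_le_add_iff, e]
        exact delta_le_gap hG
      | node L' R' =>
        obtain ⟨h', hh, heq⟩ := exists_lopt_eq (G := node L' R')
          (by simpa [lopts] using isWT_node_ne_left hH)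
        have hsz := sizeOf_lt_of_mem_lopts hh
        have hwt : IsWT h' true := by simpa using isWT_of_mem_lopts hH hh
        have h12 := S12 G h' (by omega) hG hwt
        have hb : Rout (G.add h') ≤ Lout (G.add (node L' R')) := le_Lout_add_r hh
        calc ((Rout G + Lout (node L' R') : ℤ) : WithBot ℤ)
            = ((Rout G + Rout h' : ℤ) : WithBot ℤ) := by rw [heq]
          _ ≤ ((Rout (G.add h') : ℤ) : WithBot ℤ) + gap G false := h12
          _ ≤ ((Lout (G.add (node L' R')) : ℤ) : WithBot ℤ) + gap G false :=
              add_le_add_left (wb_coe_mono hb) _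
    -- S12 : pG = false, pH = true : ↑(R G + R H) ≤ ↑R(G+H) + gap₀ G
    · rintro rfl rfl
      cases H with
      | int m => exact absurd (isWT_int_false hH) (by simp)
      | node L' R' =>
        rcases Rout_add_attained (G := G) (H := node L' R')
            (Or.inr (by simpa [ropts] using isWT_node_ne_right hH)) with
          ⟨g, hg, heq⟩ | ⟨h', hh, heq⟩
        · have hsz := sizeOf_lt_of_mem_ropts hg
          have hwt : IsWT g true := by simpa using isWT_of_mem_ropts hG hg
          have h10 := S10 g (node L' R') (by omega) hwt hH
          have hb : Rout G ≤ Lout g := Rout_le_Lout_of_mem_ropts hg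
          have hmono : gap g false ≤ gap G false := gap_mono (subgame_of_mem_ropts hg) false
          calc ((Rout G + Rout (node L' R') : ℤ) : WithBot ℤ)
              ≤ ((Lout g + Rout (node L' R') : ℤ) : WithBot ℤ) := wb_coe_mono (by omega)
            _ ≤ ((Lout (g.add (node L' R')) : ℤ) : WithBot ℤ) + gap g false := h10
            _ = ((Rout (G.add (node L' R')) : ℤ) : WithBot ℤ) + gap g false := by rw [heq]
            _ ≤ ((Rout (G.add (node L' R')) : ℤ) : WithBot ℤ) + gap G false :=
                add_le_add_right hmono _
        · have hsz := sizeOf_lt_of_mem_ropts hh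
          have hwt : IsWT h' false := by simpa using isWT_of_mem_ropts hH hh
          have h11 := S11 G h' (by omega) hG hwt
          have hb : Rout (node L' R') ≤ Lout h' := Rout_le_Lout_of_mem_ropts hh
          calc ((Rout G + Rout (node L' R') : ℤ) : WithBot ℤ)
              ≤ ((Rout G + Lout h' : ℤ) : WithBot ℤ) := wb_coe_mono (by omega)
            _ ≤ ((Lout (G.add h') : ℤ) : WithBot ℤ) + gap G false := h11
            _ = ((Rout (G.add (node L' R')) : ℤ) : WithBot ℤ) + gap G false := by rw [heq]
    -- S13 : pG = false, pH = true : ↑R(G+H) ≤ ↑(R G + L H) + max gap₁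
    · rintro rfl rfl
      cases G with
      | int m =>
        rw [Rout_int_add hH m]
        have e : m + Rout H - (Rout (int m) + Lout H) = Rout H - Lout H := by
          rw [Rout_int]; ring
        rw [wb_le_add_iff, e]
        exact le_trans (delta_le_gap hH) (le_max_right _ _)
      | node L R =>
        obtain ⟨g, hg, heq⟩ := exists_ropt_eq (G := node L R)
          (by simpa [ropts] using isWT_node_ne_right hG)
        have hsz := sizeOf_lt_of_mem_ropts hg
        have hwt : IsWT g true := by simpa using isWT_of_mem_ropts hG hg
        have h15 := S15 g H (by omega) hwt hH
        have h1 : Rout ((node L R).add H) ≤ Lout (g.add H) := Rout_add_le_l hg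
        have hmono : max (gap g true) (gap H true) ≤ max (gap (node L R) true) (gap H true) :=
          max_le_max (gap_mono (subgame_of_mem_ropts hg) true) le_rfl
        calc ((Rout ((node L R).add H) : ℤ) : WithBot ℤ)
            ≤ ((Lout (g.add H) : ℤ) : WithBot ℤ) := wb_coe_mono h1
          _ ≤ ((Lout g + Lout H : ℤ) : WithBot ℤ) + max (gap g true) (gap H true) := h15
          _ = ((Rout (node L R) + Lout H : ℤ) : WithBot ℤ) + max (gap g true) (gap H true) := by
              rw [heq]
          _ ≤ ((Rout (node L R) + Lout H : ℤ) : WithBot ℤ) +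
                max (gap (node L R) true) (gap H true) := add_le_add_right hmono _
    -- S14 : pG = true, pH = false : ↑R(G+H) ≤ ↑(L G + R H) + max gap₁
    · rintro rfl rfl
      cases H with
      | int m =>
        rw [Rout_add_int hG m]
        have e : Rout G + m - (Lout G + Rout (int m)) = Rout G - Lout G := by
          rw [Rout_int]; ring
        rw [wb_le_add_iff, e]
        exact le_trans (delta_le_gap hG) (le_max_left _ _)
      | node L' R' =>
        obtain ⟨h', hh, heq⟩ := exists_ropt_eq (G := node L' R')
          (by simpa [ropts] using isWT_node_ne_right hH)
        have hsz := sizeOf_lt_of_mem_ropts hh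
        have hwt : IsWT h' true := by simpa using isWT_of_mem_ropts hH hh
        have h15 := S15 G h' (by omega) hG hwt
        have h1 : Rout (G.add (node L' R')) ≤ Lout (G.add h') := Rout_add_le_r hh
        have hmono : max (gap G true) (gap h' true) ≤ max (gap G true) (gap (node L' R') true) :=
          max_le_max le_rfl (gap_mono (subgame_of_mem_ropts hh) true)
        calc ((Rout (G.add (node L' R')) : ℤ) : WithBot ℤ)
            ≤ ((Lout (G.add h') : ℤ) : WithBot ℤ) := wb_coe_mono h1
          _ ≤ ((Lout G + Lout h' : ℤ) : WithBot ℤ) + max (gap G true) (gap h' true) := h15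
          _ = ((Lout G + Rout (node L' R') : ℤ) : WithBot ℤ) + max (gap G true) (gap h' true) := by
              rw [heq]
          _ ≤ ((Lout G + Rout (node L' R') : ℤ) : WithBot ℤ) +
                max (gap G true) (gap (node L' R') true) := add_le_add_right hmono _
    -- S15 : pG = true, pH = true : ↑L(G+H) ≤ ↑(L G + L H) + max gap₁
    · rintro rfl rfl
      cases G with
      | int m => exact absurd (isWT_int_false hG) (by simp)
      | node L R =>
        rcases Lout_add_attained (G := node L R) (H := H)
            (Or.inl (by simpa [lopts] using isWT_node_ne_left hG)) with
          ⟨g, hg, heq⟩ | ⟨h', hh, heq⟩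
        · have hsz := sizeOf_lt_of_mem_lopts hg
          have hwt : IsWT g false := by simpa using isWT_of_mem_lopts hG hg
          have h13 := S13 g H (by omega) hwt hH
          have hb : Rout g ≤ Lout (node L R) := Rout_le_Lout_of_mem_lopts hg
          have hmono : max (gap g true) (gap H true) ≤ max (gap (node L R) true) (gap H true) :=
            max_le_max (gap_mono (subgame_of_mem_lopts hg) true) le_rfl
          calc ((Lout ((node L R).add H) : ℤ) : WithBot ℤ)
              = ((Rout (g.add H) : ℤ) : WithBot ℤ) := by rw [heq]
            _ ≤ ((Rout g + Lout H : ℤ) : WithBot ℤ) + max (gap g true) (gap H true) := h13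
            _ ≤ ((Lout (node L R) + Lout H : ℤ) : WithBot ℤ) +
                  max (gap (node L R) true) (gap H true) :=
                add_le_add (wb_coe_mono (by omega)) hmono
        · have hsz := sizeOf_lt_of_mem_lopts hh
          have hwt : IsWT h' false := by simpa using isWT_of_mem_lopts hH hh
          have h14 := S14 (node L R) h' (by omega) hG hwt
          have hb : Rout h' ≤ Lout H := Rout_le_Lout_of_mem_lopts hh
          have hmono : max (gap (node L R) true) (gap h' true) ≤
              max (gap (node L R) true) (gap H true) :=
            max_le_max le_rfl (gap_mono (subgame_of_mem_lopts hh) true)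
          calc ((Lout ((node L R).add H) : ℤ) : WithBot ℤ)
              = ((Rout ((node L R).add h') : ℤ) : WithBot ℤ) := by rw [heq]
            _ ≤ ((Lout (node L R) + Rout h' : ℤ) : WithBot ℤ) +
                  max (gap (node L R) true) (gap h' true) := h14
            _ ≤ ((Lout (node L R) + Lout H : ℤ) : WithBot ℤ) +
                  max (gap (node L R) true) (gap H true) :=
                add_le_add (wb_coe_mono (by omega)) hmono

end WT

/-- gap₀(G+H) ≤ gap₀(G) + gap₀(H) and gap₁(G+H) ≤ max(gap₁(G), gap₁(H)). -/
theorem gap_add (G H : WT) (hG : G.Wt) (hH : H.Wt) :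
    (G.add H).gap false ≤ G.gap false + H.gap false ∧
    (G.add H).gap true ≤ max (G.gap true) (H.gap true) := by
  open WT in
  obtain ⟨p, hG⟩ := hG
  obtain ⟨q, hH⟩ := hH
  constructor
  · rcases Set.eq_empty_or_nonempty (Sg (G.add H) false) with he | hne
    · rw [gap_eq, he, WithBot.sSup_empty]
      exact bot_le
    · rw [gap_eq]
      refine csSup_le hne ?_
      rintro x ⟨K, hsub, hK, rfl⟩
      obtain ⟨G', H', hsg, hsh, rfl⟩ := subgame_add_decomp G H K hsub
      obtain ⟨p', hG'⟩ := subgame_isWT hsg p hG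
      obtain ⟨q', hH'⟩ := subgame_isWT hsh q hH
      have hpq : xor p' q' = false := isWT_unique _ _ _ (isWT_add _ _ _ _ hG' hH') hK
      have hfin : ((Rout (G'.add H') - Lout (G'.add H') : ℤ) : WithBot ℤ) ≤
          gap G' false + gap H' false := by
        cases p' <;> cases q' <;> simp only [Bool.xor_false, Bool.xor_true, Bool.false_xor,
          Bool.true_xor, Bool.not_true, Bool.not_false] at hpq
        · -- both even
          have C := core (sizeOf G' + sizeOf H') G' H' false false le_rfl hG' hH'
          have h8 := C.2.2.2.2.1 rfl rfl
          have h11 := C.2.2.2.2.2.2.2.1 rfl rfl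
          rw [← wb_le_add_iff]
          calc ((Rout (G'.add H') : ℤ) : WithBot ℤ)
              ≤ ((Rout G' + Lout H' : ℤ) : WithBot ℤ) + gap H' false := h8
            _ ≤ (((Lout (G'.add H') : ℤ) : WithBot ℤ) + gap G' false) + gap H' false :=
                add_le_add_left h11 _
            _ = ((Lout (G'.add H') : ℤ) : WithBot ℤ) + (gap G' false + gap H' false) :=
                add_assoc _ _ _
        · exact absurd hpq (by simp)
        · exact absurd hpq (by simp)
        · -- both odd
          have C := core (sizeOf G' + sizeOf H') G' H' true true le_rfl hG' hH'
          have h7 := C.2.2.2.1 rfl rfl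
          have h10 := C.2.2.2.2.2.2.1 rfl rfl
          rw [← wb_le_add_iff]
          calc ((Rout (G'.add H') : ℤ) : WithBot ℤ)
              ≤ ((Lout G' + Rout H' : ℤ) : WithBot ℤ) + gap H' false := h7
            _ ≤ (((Lout (G'.add H') : ℤ) : WithBot ℤ) + gap G' false) + gap H' false :=
                add_le_add_left h10 _
            _ = ((Lout (G'.add H') : ℤ) : WithBot ℤ) + (gap G' false + gap H' false) :=
                add_assoc _ _ _
      exact le_trans hfin (add_le_add (gap_mono hsg false) (gap_mono hsh false))
  · rcases Set.eq_empty_or_nonempty (Sg (G.add H) true) with he | hne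
    · rw [gap_eq, he, WithBot.sSup_empty]
      exact bot_le
    · rw [gap_eq]
      refine csSup_le hne ?_
      rintro x ⟨K, hsub, hK, rfl⟩
      obtain ⟨G', H', hsg, hsh, rfl⟩ := subgame_add_decomp G H K hsub
      obtain ⟨p', hG'⟩ := subgame_isWT hsg p hG
      obtain ⟨q', hH'⟩ := subgame_isWT hsh q hH
      have hpq : xor p' q' = true := isWT_unique _ _ _ (isWT_add _ _ _ _ hG' hH') hK
      have hfin : ((Rout (G'.add H') - Lout (G'.add H') : ℤ) : WithBot ℤ) ≤
          max (gap G' true) (gap H' true) := by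
        cases p' <;> cases q' <;> simp only [Bool.xor_false, Bool.xor_true, Bool.false_xor,
          Bool.true_xor, Bool.not_true, Bool.not_false] at hpq
        · exact absurd hpq (by simp)
        · -- G' even, H' odd
          have C := core (sizeOf G' + sizeOf H') G' H' false true le_rfl hG' hH'
          have h13 := C.2.2.2.2.2.2.2.2.2.1 rfl rfl
          have h4 := C.1 rfl rfl
          rw [← wb_le_add_iff]
          calc ((Rout (G'.add H') : ℤ) : WithBot ℤ)
              ≤ ((Rout G' + Lout H' : ℤ) : WithBot ℤ) + max (gap G' true) (gap H' true) := h13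
            _ ≤ ((Lout (G'.add H') : ℤ) : WithBot ℤ) + max (gap G' true) (gap H' true) :=
                add_le_add_left (wb_coe_mono h4) _
        · -- G' odd, H' even
          have C := core (sizeOf G' + sizeOf H') G' H' true false le_rfl hG' hH'
          have h14 := C.2.2.2.2.2.2.2.2.2.2.1 rfl rfl
          have h5 := C.2.1 rfl rfl
          rw [← wb_le_add_iff]
          calc ((Rout (G'.add H') : ℤ) : WithBot ℤ)
              ≤ ((Lout G' + Rout H' : ℤ) : WithBot ℤ) + max (gap G' true) (gap H' true) := h14
            _ ≤ ((Lout (G'.add H') : ℤ) : WithBot ℤ) + max (gap G' true) (gap H' true) :=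
                add_le_add_left (wb_coe_mono h5) _
        · exact absurd hpq (by simp)
      exact le_trans hfin (max_le_max (gap_mono hsg true) (gap_mono hsh true))
end
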